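/- Let s ≥ 2 be an integer and let g : ℝ → ℝ satisfy: for every admissible digit sequence a, g(∑_{n=0}^∞ a n / s^{n+1}) = ∑_{n=0}^∞ (−1)^{n+1} a n / s^{n+1}. Then g is discontinuous at every s-adic rational point of (0,1): for every x ∈ (0,1) such that s^n · x ∈ ℤ for some n ∈ ℕ, g is not ContinuousWithinAt on [0,1) at x. (Paper's Theorem 1, discontinuity part, for the function f₊.) -/

import Mathlib

open Finset Filter

lemma digitSum (s : ℕ) (hs : 2 ≤ s) : ∀ (N p : ℕ), p < s ^ N →
    ∑ j ∈ range N, (p / s ^ j % s) * s ^ j = p := by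
  intro N
  induction N with
  | zero => intro p hp; simp only [pow_zero, Nat.lt_one_iff] at hp; simp [hp]
  | succ N ih =>
    intro p hp
    rw [Finset.sum_range_succ']
    have h1 : ∀ j, (p / s ^ (j+1) % s) * s ^ (j+1) = s * (((p / s) / s ^ j % s) * s ^ j) := by
      intro j
      rw [pow_succ']
      rw [← Nat.div_div_eq_div_mul]
      ring
    have h2 : ∑ j ∈ range N, (p / s ^ (j+1) % s) * s ^ (j+1)
        = s * ∑ j ∈ range N, ((p / s) / s ^ j % s) * s ^ j := by
      rw [Finset.mul_sum]; exact Finset.sum_congr rfl fun j _ => h1 j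
    have hps : p / s < s ^ N := by
      rw [Nat.div_lt_iff_lt_mul (by omega)]
      calc p < s ^ (N+1) := hp
        _ = s ^ N * s := by rw [pow_succ]
    rw [h2, ih _ hps]
    simp only [pow_zero, mul_one, Nat.div_one]
    have := Nat.div_add_mod p s
    omega

theorem stmt_13 (s : ℕ) (hs : 2 ≤ s) (g : ℝ → ℝ)
    (hg : ∀ a : ℕ → ℕ, (∀ n, a n ≤ s - 1) → (¬ ∃ N, ∀ n ≥ N, a n = s - 1) →
      g (∑' n : ℕ, (a n : ℝ) / (s : ℝ) ^ (n + 1)) =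
        ∑' n : ℕ, (-1 : ℝ) ^ (n + 1) * (a n : ℝ) / (s : ℝ) ^ (n + 1)) :
    ∀ x ∈ Set.Ioo (0 : ℝ) 1, (∃ n : ℕ, ∃ m : ℤ, (s : ℝ) ^ n * x = (m : ℝ)) →
      ¬ ContinuousWithinAt g (Set.Ico 0 1) x := by
  intro x hx hrat hcont
  obtain ⟨hx0, hx1⟩ := hx
  have hS0 : (0:ℝ) < (s:ℝ) := by positivity
  have hS1 : (1:ℝ) < (s:ℝ) := by exact_mod_cast hs.trans_lt' one_lt_two
  have hSne : (s:ℝ) ≠ 0 := ne_of_gt hS0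
  -- minimal exponent N with s^N * x ∈ ℕ
  have hP : ∃ k, ∃ q : ℕ, (s:ℝ) ^ k * x = (q:ℝ) := by
    obtain ⟨n, m, hm⟩ := hrat
    have hm0 : 0 ≤ m := by
      by_contra h
      have : (m:ℝ) < 0 := by exact_mod_cast not_le.mp h
      nlinarith [pow_pos hS0 n]
    refine ⟨n, m.toNat, ?_⟩
    rw [hm]
    exact_mod_cast (Int.toNat_of_nonneg hm0).symm
  classical
  set N := Nat.find hP with hNdef
  obtain ⟨p, hp⟩ : ∃ q : ℕ, (s:ℝ) ^ N * x = (q:ℝ) := Nat.find_spec hP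
  have hN1 : 1 ≤ N := by
    rcases Nat.eq_zero_or_pos N with h | h
    · exfalso
      have := Nat.find_spec hP
      rw [← hNdef, h] at this
      obtain ⟨q, hq⟩ := this
      simp only [pow_zero, one_mul] at hq
      rcases Nat.eq_zero_or_pos q with h0 | h0
      · rw [h0] at hq; simp at hq; linarith
      · have : (1:ℝ) ≤ (q:ℝ) := by exact_mod_cast h0
        linarith [hq ▸ this]
    · exact h
  have hp1 : 1 ≤ p := by
    rcases Nat.eq_zero_or_pos p with h0 | h0
    · exfalso
      have hpw := pow_pos hS0 N
      rw [h0] at hp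
      push_cast at hp
      nlinarith
    · exact h0
  have hpN : p < s ^ N := by
    have : (p:ℝ) < (s:ℝ)^N := by
      rw [← hp]
      nlinarith [pow_pos hS0 N]
    exact_mod_cast this
  -- minimality: p % s ≠ 0
  have hpmod : p % s ≠ 0 := by
    intro hdvd
    have hq : (s:ℝ) ^ (N-1) * x = ((p / s : ℕ) : ℝ) := by
      have hps : (s:ℝ) * ((s:ℝ) ^ (N-1) * x) = (s:ℝ) * ((p / s : ℕ) : ℝ) := by
        have hpow : (s:ℝ) * (s:ℝ)^(N-1) = (s:ℝ)^N := by
          rw [← pow_succ']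
          congr 1
          omega
        have : (s:ℕ) * (p / s) = p := Nat.mul_div_cancel' (Nat.dvd_of_mod_eq_zero hdvd)
        rw [← mul_assoc, hpow, hp, ← Nat.cast_mul, this]
      exact mul_left_cancel₀ hSne hps
    have := Nat.find_min hP (m := N - 1) (by omega)
    exact this ⟨p / s, hq⟩
  have hxval : x = (p:ℝ) / (s:ℝ)^N := by
    field_simp
    linarith [hp]
  -- digits
  set a : ℕ → ℕ := fun n => if n < N then p / s ^ (N - 1 - n) % s else 0 with ha
  have haN : ∀ n, N ≤ n → a n = 0 := fun n hn => if_neg (by omega)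
  have hab : ∀ n, a n ≤ s - 1 := by
    intro n
    simp only [ha]
    split
    · have := Nat.mod_lt (p / s ^ (N-1-n)) (show 0 < s by omega); omega
    · omega
  have halast : 1 ≤ a (N - 1) := by
    simp only [ha, if_pos (by omega : N - 1 < N)]
    simp only [Nat.sub_self, pow_zero, Nat.div_one]
    omega
  have hasum : ∑ i ∈ range N, a i * s ^ (N - 1 - i) = p := by
    have hrefl := Finset.sum_range_reflect (fun j => (p / s ^ j % s) * s ^ j) N
    have hsum : ∑ i ∈ range N, a i * s ^ (N - 1 - i)
        = ∑ i ∈ range N, (p / s ^ (N - 1 - i) % s) * s ^ (N - 1 - i) :=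
      Finset.sum_congr rfl (fun i hi => by
        simp only [ha, if_pos (Finset.mem_range.mp hi)])
    rw [hsum, hrefl]
    exact digitSum s hs N p hpN
  -- tsum reductions
  have hfin : ∀ (c : ℕ → ℕ) (M : ℕ), (∀ n, M ≤ n → c n = 0) →
      (∑' n : ℕ, (c n : ℝ) / (s:ℝ)^(n+1)) = ∑ n ∈ range M, (c n : ℝ) / (s:ℝ)^(n+1) :=
    fun c M h => tsum_eq_sum (fun i hi => by
      rw [h i (by simpa using hi)]; simp)
  have hfin2 : ∀ (c : ℕ → ℕ) (M : ℕ), (∀ n, M ≤ n → c n = 0) →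
      (∑' n : ℕ, (-1:ℝ)^(n+1) * (c n : ℝ) / (s:ℝ)^(n+1))
        = ∑ n ∈ range M, (-1:ℝ)^(n+1) * (c n : ℝ) / (s:ℝ)^(n+1) :=
    fun c M h => tsum_eq_sum (fun i hi => by
      rw [h i (by simpa using hi)]; simp)
  have hadm : ∀ (c : ℕ → ℕ) (M : ℕ), (∀ n, M ≤ n → c n = 0) →
      ¬ ∃ N₀, ∀ n ≥ N₀, c n = s - 1 := by
    rintro c M h ⟨N₀, hN₀⟩
    have h1 := hN₀ (max N₀ M) (le_max_left _ _)
    have h2 := h (max N₀ M) (le_max_right _ _)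
    omega
  -- the expansion of x over any range of length M ≥ N
  have hxsumM : ∀ M, N ≤ M → ∑ n ∈ range M, (a n : ℝ) / (s:ℝ)^(n+1) = x := by
    intro M hM
    have h1 : ∑ n ∈ range M, (a n : ℝ) / (s:ℝ)^(n+1)
        = ∑ n ∈ range N, (a n : ℝ) / (s:ℝ)^(n+1) := by
      rw [← hfin a N haN, hfin a M (fun n hn => haN n (hM.trans hn))]
    rw [h1]
    have h2 : ∀ i ∈ range N, (a i : ℝ) / (s:ℝ)^(i+1)
        = ((a i * s ^ (N-1-i) : ℕ) : ℝ) / (s:ℝ)^N := by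
      intro i hi
      have hiN := Finset.mem_range.mp hi
      have hexp : (N-1-i) + (i+1) = N := by omega
      push_cast
      rw [div_eq_div_iff (by positivity) (by positivity),
        show (s:ℝ)^N = (s:ℝ)^(N-1-i) * (s:ℝ)^(i+1) from by rw [← pow_add, hexp]]
      ring
    rw [Finset.sum_congr rfl h2, ← Finset.sum_div, ← Nat.cast_sum, hasum, ← hxval]
  have hxsum : (∑' n : ℕ, (a n : ℝ) / (s:ℝ)^(n+1)) = x := by
    rw [hfin a N haN]; exact hxsumM N le_rfl
  have hgx : g x = ∑ n ∈ range N, (-1:ℝ)^(n+1) * (a n : ℝ) / (s:ℝ)^(n+1) := by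
    rw [← hxsum, hg a hab (hadm a N haN), hfin2 a N haN]
  -- the approximating digit sequences
  set b : ℕ → ℕ → ℕ := fun k n =>
    if n < N - 1 then a n else if n = N - 1 then a (N-1) - 1 else
      if n < N + k then s - 1 else 0 with hbdef
  have hbN : ∀ k n, N + k ≤ n → b k n = 0 := by
    intro k n hn
    simp only [hbdef]
    rw [if_neg (by omega), if_neg (by omega), if_neg (by omega)]
  have hbb : ∀ k n, b k n ≤ s - 1 := by
    intro k n
    simp only [hbdef]
    have := hab n
    have := hab (N-1)
    split_ifs <;> omega
  have hbsame : ∀ k n, n < N + k → b (k+1) n = b k n := by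
    intro k n hn
    simp only [hbdef]
    split_ifs <;> omega
  have hblast : b 0 (N-1) = a (N-1) - 1 := by
    simp only [hbdef]
    rw [if_neg (by omega)]
    simp
  have hblow : ∀ k n, n < N - 1 → b k n = a n := by
    intro k n hn
    simp only [hbdef]
    rw [if_pos hn]
  have hbtop : ∀ k n, N ≤ n → n < N + k → b k n = s - 1 := by
    intro k n h1 h2
    simp only [hbdef]
    rw [if_neg (by omega), if_neg (by omega), if_pos h2]
  -- value of the approximants
  have hdiff : ∀ k, ∑ n ∈ range (N+k), (((a n:ℝ)) - (b k n : ℝ)) / (s:ℝ)^(n+1)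
      = ((s:ℝ)^(N+k))⁻¹ := by
    intro k
    induction k with
    | zero =>
      rw [show N + 0 = (N-1)+1 from by omega, Finset.sum_range_succ]
      have h0 : ∑ n ∈ range (N-1), (((a n:ℝ)) - (b 0 n : ℝ)) / (s:ℝ)^(n+1) = 0 :=
        Finset.sum_eq_zero (fun n hn => by
          rw [hblow 0 n (Finset.mem_range.mp hn)]; ring)
      rw [h0, zero_add, hblast, Nat.cast_sub halast,
        show (N-1)+1 = N from by omega]
      rw [sub_sub_cancel]
      norm_num
    | succ k ih =>
      rw [show N+(k+1) = (N+k)+1 from rfl, Finset.sum_range_succ]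
      have hcongr : ∑ n ∈ range (N+k), (((a n:ℝ)) - (b (k+1) n : ℝ)) / (s:ℝ)^(n+1)
          = ∑ n ∈ range (N+k), (((a n:ℝ)) - (b k n : ℝ)) / (s:ℝ)^(n+1) :=
        Finset.sum_congr rfl (fun n hn => by
          rw [hbsame k n (Finset.mem_range.mp hn)])
      rw [hcongr, ih, haN (N+k) (by omega), hbtop (k+1) (N+k) (by omega) (by omega),
        Nat.cast_sub (by omega : 1 ≤ s)]
      push_cast
      rw [pow_succ]
      field_simp
      ring
  -- geometric sums
  set G : ℕ → ℝ := fun k => ∑ j ∈ range k, (-(s:ℝ)⁻¹)^j with hGdef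
  have hGpos : ∀ k, 0 ≤ G k := by
    intro k
    have hsinv : (0:ℝ) < (s:ℝ)⁻¹ := by positivity
    have hne : (-(s:ℝ)⁻¹) ≠ 1 := by linarith
    have habs : |(-(s:ℝ)⁻¹)| ≤ 1 := by
      rw [abs_neg, abs_inv, abs_of_pos hS0]
      exact inv_le_one_of_one_le₀ (by linarith)
    have hx1 : (-(s:ℝ)⁻¹)^k ≤ 1 := by
      calc (-(s:ℝ)⁻¹)^k ≤ |(-(s:ℝ)⁻¹)^k| := le_abs_self _
        _ = |(-(s:ℝ)⁻¹)|^k := abs_pow _ _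
        _ ≤ 1 := pow_le_one₀ (abs_nonneg _) habs
    simp only [hGdef]
    rw [geom_sum_eq hne]
    exact div_nonneg_iff.mpr (Or.inr ⟨by linarith, by linarith⟩)
  -- signed difference
  have hgdiff : ∀ k, ∑ n ∈ range (N+k),
      ((-1:ℝ)^(n+1) * (b k n : ℝ) / (s:ℝ)^(n+1) - (-1:ℝ)^(n+1) * (a n : ℝ) / (s:ℝ)^(n+1))
      = (-1:ℝ)^(N+1) * ((s:ℝ)^N)⁻¹ * (1 + ((s:ℝ)-1) * (s:ℝ)⁻¹ * G k) := by
    intro k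
    induction k with
    | zero =>
      rw [show N + 0 = (N-1)+1 from by omega, Finset.sum_range_succ]
      have h0 : ∑ n ∈ range (N-1),
          ((-1:ℝ)^(n+1) * (b 0 n : ℝ) / (s:ℝ)^(n+1) - (-1:ℝ)^(n+1) * (a n : ℝ) / (s:ℝ)^(n+1)) = 0 :=
        Finset.sum_eq_zero (fun n hn => by
          rw [hblow 0 n (Finset.mem_range.mp hn)]; ring)
      rw [h0, zero_add, hblast, Nat.cast_sub halast,
        show (N-1)+1 = N from by omega]
      simp only [hGdef, Finset.range_zero, Finset.sum_empty]
      push_cast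
      field_simp
      ring
    | succ k ih =>
      rw [show N+(k+1) = (N+k)+1 from rfl, Finset.sum_range_succ]
      have hcongr : ∑ n ∈ range (N+k),
          ((-1:ℝ)^(n+1) * (b (k+1) n : ℝ) / (s:ℝ)^(n+1) - (-1:ℝ)^(n+1) * (a n : ℝ) / (s:ℝ)^(n+1))
          = ∑ n ∈ range (N+k),
          ((-1:ℝ)^(n+1) * (b k n : ℝ) / (s:ℝ)^(n+1) - (-1:ℝ)^(n+1) * (a n : ℝ) / (s:ℝ)^(n+1)) :=
        Finset.sum_congr rfl (fun n hn => by
          rw [hbsame k n (Finset.mem_range.mp hn)])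
      rw [hcongr, ih, haN (N+k) (by omega), hbtop (k+1) (N+k) (by omega) (by omega),
        Nat.cast_sub (by omega : 1 ≤ s)]
      simp only [hGdef, Finset.sum_range_succ]
      have hnp : (-(s:ℝ)⁻¹)^k = (-1:ℝ)^k * ((s:ℝ)^k)⁻¹ := by
        rw [neg_pow, inv_pow]
      rw [hnp]
      push_cast
      rw [show (s:ℝ)^(N+k+1) = (s:ℝ)^N * (s:ℝ)^k * (s:ℝ) from by rw [← pow_add, ← pow_succ]]
      field_simp
      ring
  -- the approximating points
  set Y : ℕ → ℝ := fun k => x - ((s:ℝ)^(N+k))⁻¹ with hYdef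
  have hyval : ∀ k, (∑' n : ℕ, (b k n : ℝ) / (s:ℝ)^(n+1)) = Y k := by
    intro k
    rw [hfin (b k) (N+k) (hbN k)]
    have h1 : ∑ n ∈ range (N+k), ((a n:ℝ))/(s:ℝ)^(n+1) - ∑ n ∈ range (N+k), ((b k n:ℝ))/(s:ℝ)^(n+1)
        = ∑ n ∈ range (N+k), (((a n:ℝ)) - (b k n:ℝ))/(s:ℝ)^(n+1) := by
      rw [← Finset.sum_sub_distrib]
      exact Finset.sum_congr rfl fun n _ => (sub_div _ _ _).symm
    have h2 := hxsumM (N+k) (by omega)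
    have h3 := hdiff k
    simp only [hYdef]
    linarith
  have hgy : ∀ k, g (Y k) = g x
      + (-1:ℝ)^(N+1) * ((s:ℝ)^N)⁻¹ * (1 + ((s:ℝ)-1) * (s:ℝ)⁻¹ * G k) := by
    intro k
    have hval := hg (b k) (hbb k) (hadm (b k) (N+k) (hbN k))
    rw [hyval k] at hval
    rw [hval, hfin2 (b k) (N+k) (hbN k)]
    have hax : ∑ n ∈ range (N+k), (-1:ℝ)^(n+1) * (a n : ℝ) / (s:ℝ)^(n+1)
        = ∑ n ∈ range N, (-1:ℝ)^(n+1) * (a n : ℝ) / (s:ℝ)^(n+1) := by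
      rw [← hfin2 a N haN, hfin2 a (N+k) (fun n hn => haN n (by omega))]
    have h1 : ∑ n ∈ range (N+k), (-1:ℝ)^(n+1) * (b k n : ℝ) / (s:ℝ)^(n+1)
        - ∑ n ∈ range (N+k), (-1:ℝ)^(n+1) * (a n : ℝ) / (s:ℝ)^(n+1)
        = ∑ n ∈ range (N+k),
          ((-1:ℝ)^(n+1) * (b k n : ℝ) / (s:ℝ)^(n+1) - (-1:ℝ)^(n+1) * (a n : ℝ) / (s:ℝ)^(n+1)) :=
      (Finset.sum_sub_distrib _ _).symm
    have h2 := hgdiff k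
    rw [hgx]
    linarith [hax, h1, h2]
  have hbound : ∀ k, ((s:ℝ)^N)⁻¹ ≤ |g (Y k) - g x| := by
    intro k
    have hd : g (Y k) - g x
        = (-1:ℝ)^(N+1) * (((s:ℝ)^N)⁻¹ * (1 + ((s:ℝ)-1) * (s:ℝ)⁻¹ * G k)) := by
      rw [hgy k]; ring
    have hfac : (0:ℝ) ≤ ((s:ℝ)-1) * (s:ℝ)⁻¹ * G k := by
      apply mul_nonneg (mul_nonneg (by linarith) (by positivity)) (hGpos k)
    rw [hd, abs_mul, abs_pow, abs_neg, abs_one, one_pow, one_mul,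
      abs_of_pos (by positivity : (0:ℝ) < ((s:ℝ)^N)⁻¹ * (1 + ((s:ℝ)-1) * (s:ℝ)⁻¹ * G k))]
    nlinarith [inv_pos.mpr (pow_pos hS0 N)]
  -- membership and limit
  have hY0 : ∀ k, Y k ∈ Set.Ico (0:ℝ) 1 := by
    intro k
    have hik : (0:ℝ) < ((s:ℝ)^(N+k))⁻¹ := by positivity
    constructor
    · have h1 : ((s:ℝ)^(N+k))⁻¹ ≤ ((s:ℝ)^N)⁻¹ :=
        inv_anti₀ (by positivity) (pow_le_pow_right₀ (le_of_lt hS1) (by omega))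
      have h2 : ((s:ℝ)^N)⁻¹ ≤ x := by
        rw [hxval, inv_eq_one_div]
        apply div_le_div_of_nonneg_right ?_ (by positivity)
        · exact_mod_cast hp1
      simp only [hYdef]
      linarith
    · simp only [hYdef]
      linarith
  have hYlim : Filter.Tendsto Y Filter.atTop (nhds x) := by
    have h1 : Filter.Tendsto (fun k : ℕ => ((s:ℝ)⁻¹)^k) Filter.atTop (nhds 0) :=
      tendsto_pow_atTop_nhds_zero_of_lt_one (by positivity) (inv_lt_one_of_one_lt₀ hS1)
    have h2 := h1.const_mul (((s:ℝ)⁻¹)^N)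
    rw [mul_zero] at h2
    have h3 : Filter.Tendsto (fun k : ℕ => ((s:ℝ)^(N+k))⁻¹) Filter.atTop (nhds 0) := by
      convert h2 using 2 with k
      rw [pow_add, mul_inv, inv_pow, inv_pow]
    simpa only [hYdef, sub_zero] using tendsto_const_nhds.sub h3
  have hgYlim : Filter.Tendsto (fun k => g (Y k)) Filter.atTop (nhds (g x)) :=
    hcont.tendsto.comp (tendsto_nhdsWithin_iff.mpr ⟨hYlim, Filter.Eventually.of_forall hY0⟩)
  obtain ⟨K, hK⟩ := Metric.tendsto_atTop.mp hgYlim (((s:ℝ)^N)⁻¹) (by positivity)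
  have h1 := hK K le_rfl
  rw [Real.dist_eq] at h1
  linarith [hbound K]
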